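/- Let T1 and T2 be two maximum spanning trees of the intersection graph K_S of CDC(S) with dist(T1, T2) = 1. If T1 is a junction tree of CDC(S), then T2 is also a junction tree of CDC(S). -/

import Mathlib

/-- A junction tree for a labeled collection of finite index sets. -/
def IsJunctionTree {ι α : Type*} [DecidableEq α] (G : SimpleGraph ι)
    (f : ι → Finset α) : Prop :=
  G.IsTree ∧ ∀ (i j : ι) (p : G.Walk i j), p.IsPath →
    (∀ x ∈ p.support, f i ∩ f j ⊆ f x) ∧
    (∀ a b : ι, s(a, b) ∈ p.edges → f i ∩ f j ⊆ f a ∩ f b)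

open scoped Classical in
/-- The weight of a spanning tree `T` of the intersection graph `K_𝒮`:
the sum over the edges of `T` of the cardinality of the middle set `S1 ∩ S2`. -/
noncomputable def jtWeight {α : Type*} [DecidableEq α] (𝒮 : Finset (Finset α))
    (T : SimpleGraph {S // S ∈ 𝒮}) : ℕ :=
  ∑ e : Sym2 {S // S ∈ 𝒮}, if e ∈ T.edgeSet then
    Sym2.lift ⟨fun (A B : {S // S ∈ 𝒮}) => ((A : Finset α) ∩ (B : Finset α)).card,
      fun A B => by simp [Finset.inter_comm]⟩ e
  else 0

/-- A maximum spanning tree of the intersection graph `K_𝒮`. -/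
def IsMaxSpanningTree {α : Type*} [DecidableEq α] (𝒮 : Finset (Finset α))
    (T : SimpleGraph {S // S ∈ 𝒮}) : Prop :=
  T.IsTree ∧ ∀ T' : SimpleGraph {S // S ∈ 𝒮}, T'.IsTree → jtWeight 𝒮 T' ≤ jtWeight 𝒮 T

open SimpleGraph

lemma jt_exists_prefix_avoiding {V : Type*} {G : SimpleGraph V} {C D : V} :
    ∀ {u v : V} (w : G.Walk u v), w.IsPath → s(C, D) ∈ w.edges →
      ∃ (z : V) (w1 : G.Walk u z), w1.IsPath ∧ s(C, D) ∉ w1.edges ∧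
        (z = C ∨ z = D) ∧ w1.support <+: w.support := by
  intro u v w
  induction w with
  | nil => simp
  | @cons u x v h w ih =>
    intro hp hf
    rw [Walk.cons_isPath_iff] at hp
    by_cases heq : s(C, D) = s(u, x)
    · refine ⟨u, Walk.nil, Walk.IsPath.nil, by simp, ?_, ⟨w.support, by simp⟩⟩
      rw [Sym2.eq_iff] at heq
      rcases heq with ⟨h1, _⟩ | ⟨_, h2⟩
      · exact Or.inl h1.symm
      · exact Or.inr h2.symm
    · have hf' : s(C, D) ∈ w.edges := by
        rw [Walk.edges_cons, List.mem_cons] at hf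
        exact hf.resolve_left heq
      obtain ⟨z, w1, hw1p, hw1f, hz, hpre⟩ := ih hp.1 hf'
      refine ⟨z, Walk.cons h w1, ?_, ?_, hz, ?_⟩
      · rw [Walk.cons_isPath_iff]
        exact ⟨hw1p, fun hu => hp.2 (hpre.subset hu)⟩
      · rw [Walk.edges_cons, List.mem_cons]
        rintro (hc | hc)
        · exact heq hc
        · exact hw1f hc
      · obtain ⟨t, ht⟩ := hpre
        exact ⟨t, by simp [Walk.support_cons, ht]⟩

/-- If `T1`, `T2` are maximum spanning trees of the intersection graph
at distance 1 and `T1` is a junction tree of `CDC(𝒮)`, then so is `T2`. -/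
theorem junctionTree_of_adjacent_maxSpanningTree {α : Type*} [DecidableEq α]
    (𝒮 : Finset (Finset α)) (T1 T2 : SimpleGraph {S // S ∈ 𝒮})
    (h1 : IsMaxSpanningTree 𝒮 T1) (h2 : IsMaxSpanningTree 𝒮 T2)
    (hdist : (T1.edgeSet \ T2.edgeSet).ncard = 1)
    (hJ : IsJunctionTree T1 (fun S => (S : Finset α))) :
    IsJunctionTree T2 (fun S => (S : Finset α)) := by
  classical
  obtain ⟨hT1, hmax1⟩ := h1
  obtain ⟨hT2, hmax2⟩ := h2
  -- the edge removed from T1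
  obtain ⟨e, he⟩ := Set.ncard_eq_one.mp hdist
  -- both trees have the same number of edges
  have hncard : ∀ T : SimpleGraph {S // S ∈ 𝒮}, T.IsTree → T.edgeSet.ncard + 1 = Fintype.card {S // S ∈ 𝒮} := by
    intro T hT
    letI : Fintype T.edgeSet := (T.edgeSet.toFinite).fintype
    rw [Set.ncard_eq_toFinset_card']
    exact hT.card_edgeFinset
  have hcards : T1.edgeSet.ncard = T2.edgeSet.ncard := by
    have := hncard T1 hT1
    have := hncard T2 hT2
    omega
  have hdiff : ∀ (s t : Set (Sym2 {S // S ∈ 𝒮})), (s \ t).ncard + (s ∩ t).ncard = s.ncard := by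
    intro s t
    rw [← Set.diff_self_inter]
    exact Set.ncard_diff_add_ncard_of_subset Set.inter_subset_left (s.toFinite)
  have hswap : (T2.edgeSet \ T1.edgeSet).ncard = 1 := by
    have h1' := hdiff T1.edgeSet T2.edgeSet
    have h2' := hdiff T2.edgeSet T1.edgeSet
    rw [Set.inter_comm] at h2'
    omega
  obtain ⟨f, hf⟩ := Set.ncard_eq_one.mp hswap
  -- representatives
  have hrep : ∀ s : Sym2 {S // S ∈ 𝒮}, ∃ A B : {S // S ∈ 𝒮}, s = s(A, B) := fun s =>
    Sym2.ind (fun A B => ⟨A, B, rfl⟩) s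
  obtain ⟨A, B, hAB⟩ := hrep e
  obtain ⟨C, D, hCD⟩ := hrep f
  subst hAB; subst hCD
  -- basic membership facts
  have heE1 : s(A, B) ∈ T1.edgeSet := by
    have : s(A, B) ∈ T1.edgeSet \ T2.edgeSet := he ▸ rfl
    exact this.1
  have heE2 : s(A, B) ∉ T2.edgeSet := by
    have : s(A, B) ∈ T1.edgeSet \ T2.edgeSet := he ▸ rfl
    exact this.2
  have hfE2 : s(C, D) ∈ T2.edgeSet := by
    have : s(C, D) ∈ T2.edgeSet \ T1.edgeSet := hf ▸ rfl
    exact this.1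
  have hfE1 : s(C, D) ∉ T1.edgeSet := by
    have : s(C, D) ∈ T2.edgeSet \ T1.edgeSet := hf ▸ rfl
    exact this.2
  have hef : s(A, B) ≠ s(C, D) := fun hc => hfE1 (hc ▸ heE1)
  have hsub1 : ∀ s ∈ T1.edgeSet, s ≠ s(A, B) → s ∈ T2.edgeSet := by
    intro s hs hne
    by_contra hc
    exact hne (by have : s ∈ T1.edgeSet \ T2.edgeSet := ⟨hs, hc⟩; rwa [he] at this)
  have hsub2 : ∀ s ∈ T2.edgeSet, s ≠ s(C, D) → s ∈ T1.edgeSet := by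
    intro s hs hne
    by_contra hc
    exact hne (by have : s ∈ T2.edgeSet \ T1.edgeSet := ⟨hs, hc⟩; rwa [hf] at this)
  -- weights are equal
  have hwt : jtWeight 𝒮 T1 = jtWeight 𝒮 T2 := le_antisymm (hmax2 T1 hT1) (hmax1 T2 hT2)
  set g : Sym2 {S // S ∈ 𝒮} → ℕ := Sym2.lift ⟨fun (X Y : {S // S ∈ 𝒮}) =>
      ((X : Finset α) ∩ (Y : Finset α)).card, fun X Y => by simp [Finset.inter_comm]⟩ with hg
  have hjt : ∀ T : SimpleGraph {S // S ∈ 𝒮},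
      jtWeight 𝒮 T = ∑ s : Sym2 {S // S ∈ 𝒮}, if s ∈ T.edgeSet then g s else 0 := by
    intro T
    simp only [jtWeight, hg]
  have hpoint : ∀ s : Sym2 {S // S ∈ 𝒮},
      ((if s ∈ T1.edgeSet then g s else 0) + (if s = s(C,D) then g s else 0))
      = ((if s ∈ T2.edgeSet then g s else 0) + (if s = s(A,B) then g s else 0)) := by
    intro s
    by_cases h1 : s = s(A, B)
    · subst h1; simp [heE1, heE2, hef]
    · by_cases h2 : s = s(C, D)
      · subst h2; simp [hfE1, hfE2, h1]
      · simp only [if_neg h1, if_neg h2, add_zero]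
        by_cases h3 : s ∈ T1.edgeSet
        · rw [if_pos h3, if_pos (hsub1 s h3 h1)]
        · rw [if_neg h3, if_neg (fun hc => h3 (hsub2 s hc h2))]
  have hW : jtWeight 𝒮 T1 + g s(C,D) = jtWeight 𝒮 T2 + g s(A,B) := by
    rw [hjt T1, hjt T2]
    rw [show g s(C,D) = ∑ s : Sym2 {S // S ∈ 𝒮}, if s = s(C,D) then g s else 0 by simp,
        show g s(A,B) = ∑ s : Sym2 {S // S ∈ 𝒮}, if s = s(A,B) then g s else 0 by simp]
    rw [← Finset.sum_add_distrib, ← Finset.sum_add_distrib]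
    exact Finset.sum_congr rfl fun s _ => hpoint s
  have hgef : ((A : Finset α) ∩ (B : Finset α)).card
      = ((C : Finset α) ∩ (D : Finset α)).card := by
    have hge : g s(A,B) = g s(C,D) := by omega
    simpa [hg] using hge
  -- the middle sets coincide
  have hadjCD : T2.Adj C D := hfE2
  have hsubCD : (C : Finset α) ∩ (D : Finset α) ⊆ (A : Finset α) ∩ (B : Finset α) := by
    obtain ⟨r0⟩ := hT1.isConnected.preconnected C D
    set r := r0.toPath with hr
    by_cases hre : s(A, B) ∈ (r : T1.Walk C D).edges
    · exact (hJ.2 C D r r.2).2 A B hre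
    · exfalso
      have hall : ∀ s ∈ (r : T1.Walk C D).edges, s ∈ T2.edgeSet := fun s hs =>
        hsub1 s ((r : T1.Walk C D).edges_subset_edgeSet hs) (fun hh => hre (hh ▸ hs))
      have hr2p : ((r : T1.Walk C D).transfer T2 hall).IsPath := r.2.transfer hall
      have hp1 : (Walk.cons hadjCD (Walk.nil : T2.Walk D D)).IsPath := by
        simp [Walk.cons_isPath_iff, hadjCD.ne]
      have huniq := hT2.IsAcyclic.path_unique ⟨_, hr2p⟩ ⟨_, hp1⟩
      have hedges : ((r : T1.Walk C D).transfer T2 hall).edges = [s(C, D)] := by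
        rw [congrArg (fun q : T2.Path C D => (q : T2.Walk C D).edges) huniq]
        simp
      have hmem : s(C, D) ∈ (r : T1.Walk C D).edges := by
        rw [← Walk.edges_transfer _ hall, hedges]; simp
      exact hfE1 ((r : T1.Walk C D).edges_subset_edgeSet hmem)
  have hABCD : (A : Finset α) ∩ (B : Finset α) = (C : Finset α) ∩ (D : Finset α) :=
    (Finset.eq_of_subset_of_card_le hsubCD (le_of_eq hgef)).symm
  -- Lemma N: a T2-path through s(C,D) forces the endpoints' intersection inside C ∩ D
  have hN : ∀ (i j : {S // S ∈ 𝒮}) (p : T2.Walk i j), p.IsPath → s(C,D) ∈ p.edges →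
      (i : Finset α) ∩ (j : Finset α) ⊆ (C : Finset α) ∩ (D : Finset α) := by
    intro i j p hp hfp
    obtain ⟨r0⟩ := hT1.isConnected.preconnected i j
    set r := r0.toPath with hr
    by_cases hre : s(A, B) ∈ (r : T1.Walk i j).edges
    · have h' := (hJ.2 i j r r.2).2 A B hre
      exact fun x hx => hABCD ▸ h' hx
    · exfalso
      have hall : ∀ s ∈ (r : T1.Walk i j).edges, s ∈ T2.edgeSet := fun s hs =>
        hsub1 s ((r : T1.Walk i j).edges_subset_edgeSet hs) (fun hh => hre (hh ▸ hs))
      have hr2p : ((r : T1.Walk i j).transfer T2 hall).IsPath := r.2.transfer hall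
      have huniq := hT2.IsAcyclic.path_unique ⟨_, hr2p⟩ ⟨p, hp⟩
      have hedges : ((r : T1.Walk i j).transfer T2 hall).edges = p.edges :=
        congrArg (fun q : T2.Path i j => (q : T2.Walk i j).edges) huniq
      rw [Walk.edges_transfer] at hedges
      exact hfE1 ((r : T1.Walk i j).edges_subset_edgeSet (hedges ▸ hfp))
  -- Lemma M: a T2-path avoiding s(C,D) is a T1-path
  have hM : ∀ (i j : {S // S ∈ 𝒮}) (p : T2.Walk i j), p.IsPath → s(C,D) ∉ p.edges →
      (∀ x ∈ p.support, (i : Finset α) ∩ (j : Finset α) ⊆ (x : Finset α)) ∧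
      (∀ a b : {S // S ∈ 𝒮}, s(a,b) ∈ p.edges →
        (i : Finset α) ∩ (j : Finset α) ⊆ (a : Finset α) ∩ (b : Finset α)) := by
    intro i j p hp hfp
    have hall : ∀ s ∈ p.edges, s ∈ T1.edgeSet := fun s hs =>
      hsub2 s (p.edges_subset_edgeSet hs) (fun hh => hfp (hh ▸ hs))
    have h' := hJ.2 i j (p.transfer T1 hall) (hp.transfer hall)
    rw [Walk.support_transfer, Walk.edges_transfer] at h'
    exact h'
  -- KEY: edge condition for all T2-paths
  have hKEY : ∀ (i j : {S // S ∈ 𝒮}) (p : T2.Walk i j), p.IsPath →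
      ∀ a b : {S // S ∈ 𝒮}, s(a,b) ∈ p.edges →
        (i : Finset α) ∩ (j : Finset α) ⊆ (a : Finset α) ∩ (b : Finset α) := by
    intro i j p
    induction p with
    | nil => intro _ a b hab; simp at hab
    | @cons i k j h q ih =>
      intro hp a b hab
      by_cases hfp : s(C,D) ∈ (Walk.cons h q).edges
      · have hijCD := hN _ _ _ hp hfp
        by_cases hfirst : s(i,k) = s(C,D)
        · -- first edge is the new edge
          have hfq : s(C,D) ∉ q.edges := by
            have hnd := hp.edges_nodup
            rw [Walk.edges_cons, List.nodup_cons] at hnd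
            exact fun hc => hnd.1 (hfirst ▸ hc)
          have hik : (i : Finset α) ∩ (k : Finset α) = (C : Finset α) ∩ (D : Finset α) := by
            rw [Sym2.eq_iff] at hfirst
            rcases hfirst with ⟨h1, h2⟩ | ⟨h1, h2⟩
            · rw [h1, h2]
            · rw [h1, h2, Finset.inter_comm]
          have hijk : (i : Finset α) ∩ (j : Finset α) ⊆ (k : Finset α) := fun x hx =>
            (Finset.mem_inter.mp (hik.symm ▸ hijCD hx)).2
          rw [Walk.edges_cons, List.mem_cons] at hab
          rcases hab with hab | hab
          · have : (a : Finset α) ∩ (b : Finset α) = (i : Finset α) ∩ (k : Finset α) := by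
              rw [Sym2.eq_iff] at hab
              rcases hab with ⟨h1, h2⟩ | ⟨h1, h2⟩
              · rw [h1, h2]
              · rw [h1, h2, Finset.inter_comm]
            rw [this, hik]
            exact hijCD
          · have hm := (hM k j q hp.of_cons hfq).2 a b hab
            exact fun x hx => hm (Finset.mem_inter.mpr
              ⟨hijk hx, (Finset.mem_inter.mp hx).2⟩)
        · -- the new edge appears later
          have hfq : s(C,D) ∈ q.edges := by
            rw [Walk.edges_cons, List.mem_cons] at hfp
            exact hfp.resolve_left (fun hc => hfirst hc.symm)
          have hijCD' := hijCD
          obtain ⟨z, w1, hw1p, hw1f, hz, hpre⟩ :=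
            jt_exists_prefix_avoiding (Walk.cons h q) hp hfp
          have hpi : i ∉ q.support := ((Walk.cons_isPath_iff h q).mp hp).2
          have hzi : z ≠ i := by
            rintro rfl
            rcases hz with rfl | rfl
            · exact hpi (q.fst_mem_support_of_mem_edges hfq)
            · exact hpi (q.snd_mem_support_of_mem_edges hfq)
          have hks : k ∈ w1.support := by
            obtain ⟨t, ht⟩ := hpre
            have hw1s := w1.support_eq_cons
            cases hw1tail : w1.support.tail with
            | nil =>
              exfalso
              apply hzi
              have hend := w1.end_mem_support
              rw [hw1s, hw1tail] at hend
              simpa using hend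
            | cons c rest =>
              rw [Walk.support_cons, q.support_eq_cons, hw1s, hw1tail] at ht
              simp only [List.cons_append, List.cons.injEq] at ht
              rw [hw1s, hw1tail]
              right
              rw [ht.2.1]
              exact List.mem_cons_self
          have hikk : (i : Finset α) ∩ (j : Finset α) ⊆ (k : Finset α) := by
            have hall : ∀ s ∈ w1.edges, s ∈ T1.edgeSet := fun s hs =>
              hsub2 s (w1.edges_subset_edgeSet hs) (fun hh => hw1f (hh ▸ hs))
            have h' := (hJ.2 i z (w1.transfer T1 hall) (hw1p.transfer hall)).1 k
              (by rwa [Walk.support_transfer])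
            intro x hx
            apply h'
            have hxz : x ∈ (z : Finset α) := by
              rcases hz with rfl | rfl
              · exact (Finset.mem_inter.mp (hijCD' hx)).1
              · exact (Finset.mem_inter.mp (hijCD' hx)).2
            exact Finset.mem_inter.mpr ⟨(Finset.mem_inter.mp hx).1, hxz⟩
          rw [Walk.edges_cons, List.mem_cons] at hab
          rcases hab with hab | hab
          · have heq : (a : Finset α) ∩ (b : Finset α) = (i : Finset α) ∩ (k : Finset α) := by
              rw [Sym2.eq_iff] at hab
              rcases hab with ⟨h1, h2⟩ | ⟨h1, h2⟩
              · rw [h1, h2]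
              · rw [h1, h2, Finset.inter_comm]
            rw [heq]
            exact fun x hx => Finset.mem_inter.mpr
              ⟨(Finset.mem_inter.mp hx).1, hikk hx⟩
          · have hm := ih hp.of_cons a b hab
            exact fun x hx => hm (Finset.mem_inter.mpr
              ⟨hikk hx, (Finset.mem_inter.mp hx).2⟩)
      · exact (hM i j (Walk.cons h q) hp hfp).2 a b hab
  -- vertex condition for all T2-paths
  have hVER : ∀ (i j : {S // S ∈ 𝒮}) (p : T2.Walk i j), p.IsPath →
      ∀ x ∈ p.support, (i : Finset α) ∩ (j : Finset α) ⊆ (x : Finset α) := by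
    intro i j p
    induction p with
    | nil =>
      intro _ x hx
      rw [Walk.support_nil, List.mem_singleton] at hx
      subst hx
      exact Finset.inter_subset_left
    | @cons i k j h q ih =>
      intro hp x hx
      rw [Walk.support_cons, List.mem_cons] at hx
      rcases hx with rfl | hx
      · exact Finset.inter_subset_left
      · have h1 := hKEY i j (Walk.cons h q) hp i k
          (by rw [Walk.edges_cons]; exact List.mem_cons_self)
        have h2 := ih hp.of_cons x hx
        exact fun y hy => h2 (Finset.mem_inter.mpr
          ⟨(Finset.mem_inter.mp (h1 hy)).2, (Finset.mem_inter.mp hy).2⟩)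
  exact ⟨hT2, fun i j p hp => ⟨hVER i j p hp, hKEY i j p hp⟩⟩
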